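/- arXiv:0801.3467 — 2 statements merged into one kernel-verified Lean document; each statement's English description precedes it below -/
import Mathlib

section
/- An n-level quantum system subject to arbitrary Kraus-type dynamics is completely state controllable: for every pair of density matrices ρ_0, ρ_f ∈ D_n there exists a finite family of n×n complex matrices K_1, …, K_λ with ∑_{i=1}^λ K_i† K_i = I_n such that ∑_{i=1}^λ K_i ρ_0 K_i† = ρ_f. -/
open Matrix BigOperators ComplexOrder

lemma conjT_std (n : ℕ) (i j : Fin n) :
    (Matrix.single i j (1:ℂ))ᴴ = Matrix.single j i (1:ℂ) := by
  ext a b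
  simp [Matrix.single, conjTranspose_apply, and_comm, apply_ite]

lemma sum_std_conj (n : ℕ) (ρ : Matrix (Fin n) (Fin n) ℂ) :
    ∑ p : Fin n × Fin n,
      Matrix.single p.1 p.2 (1:ℂ) * ρ * (Matrix.single p.1 p.2 (1:ℂ))ᴴ
      = ρ.trace • (1 : Matrix (Fin n) (Fin n) ℂ)  := by
  simp only [conjT_std]
  ext a b
  simp [Matrix.sum_apply, Matrix.mul_apply, Matrix.single, Matrix.trace,
    Matrix.one_apply, Matrix.diag, Fintype.sum_prod_type, ite_and]
  by_cases h : a = b <;>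
    simp [h, Finset.sum_ite_eq, Finset.sum_ite_eq', eq_comm]

/-- Complete state controllability under arbitrary Kraus-type dynamics: any density matrix
`ρ0` can be steered to any density matrix `ρf` by some Kraus map. -/
theorem complete_state_controllability (n : ℕ)
    (ρ0 ρf : Matrix (Fin n) (Fin n) ℂ)
    (h0 : ρ0.PosSemidef) (h0tr : ρ0.trace = 1)
    (hf : ρf.PosSemidef) (hftr : ρf.trace = 1) :
    ∃ (l : ℕ) (K : Fin l → Matrix (Fin n) (Fin n) ℂ),
      (∑ i, (K i)ᴴ * K i = 1) ∧
      ∑ i, K i * ρ0 * (K i)ᴴ = ρf := by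
  open scoped MatrixOrder in
  set S := CFC.sqrt ρf with hS
  have hSh : Sᴴ = S := (Matrix.nonneg_iff_posSemidef.mp (CFC.sqrt_nonneg ρf)).isHermitian
  have hSS : S * S = ρf := CFC.sqrt_mul_sqrt_self ρf (Matrix.nonneg_iff_posSemidef.mpr hf)
  refine ⟨n * n, fun i => S * Matrix.single (finProdFinEquiv.symm i).1
      (finProdFinEquiv.symm i).2 (1:ℂ), ?_, ?_⟩
  · rw [← finProdFinEquiv.sum_comp (ι := Fin n × Fin n)]
    simp only [Equiv.symm_apply_apply, conjTranspose_mul, hSh]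
    have h1 : ∀ p : Fin n × Fin n,
        (Matrix.single p.1 p.2 (1:ℂ))ᴴ * S * (S * Matrix.single p.1 p.2 (1:ℂ))
        = Matrix.single p.2 p.1 (1:ℂ) * ρf * (Matrix.single p.2 p.1 (1:ℂ))ᴴ := by
      intro p
      rw [conjT_std, Matrix.mul_assoc, ← Matrix.mul_assoc S S, hSS, conjT_std,
        ← Matrix.mul_assoc]
    simp_rw [h1]
    have hswap : ∑ x : Fin n × Fin n,
        Matrix.single x.2 x.1 (1:ℂ) * ρf * (Matrix.single x.2 x.1 (1:ℂ))ᴴ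
        = ∑ p : Fin n × Fin n,
        Matrix.single p.1 p.2 (1:ℂ) * ρf * (Matrix.single p.1 p.2 (1:ℂ))ᴴ :=
      Fintype.sum_equiv (Equiv.prodComm _ _) _ _ (fun x => rfl)
    rw [hswap, sum_std_conj, hftr, one_smul]
  · rw [← finProdFinEquiv.sum_comp (ι := Fin n × Fin n)]
    simp only [Equiv.symm_apply_apply, conjTranspose_mul, hSh]
    have h2 : ∀ p : Fin n × Fin n,
        S * Matrix.single p.1 p.2 (1:ℂ) * ρ0 *
          ((Matrix.single p.1 p.2 (1:ℂ))ᴴ * S)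
        = S * (Matrix.single p.1 p.2 (1:ℂ) * ρ0 *
          (Matrix.single p.1 p.2 (1:ℂ))ᴴ) * S := by
      intro p; noncomm_ring
    simp_rw [h2, ← Finset.sum_mul, ← Matrix.mul_sum, sum_std_conj, h0tr, one_smul,
      Matrix.mul_one, hSS]
end

section
/- Fix n ∈ ℕ, a density matrix ρ ∈ D_n, and a Hermitian n×n matrix O with smallest eigenvalue λ_min and largest eigenvalue λ_max. For λ = n², the objective function J(K_1, …, K_λ) = Tr[(∑_{i=1}^λ K_i ρ K_i†) O] on the complex Stiefel manifold V_n(ℂ^{λn}) = { (K_1, …, K_λ) : ∑_{i=1}^λ K_i† K_i = I_n } attains the global minimum value λ_min and the global maximum value λ_max; that is, λ_min ≤ J(K) ≤ λ_max for all K in the Stiefel manifold, and both bounds are achieved at some points of the Stiefel manifold. -/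
open Matrix BigOperators ComplexOrder

lemma sum_dite_extend {M : Type*} [AddCommMonoid M] {n m : ℕ} (hnm : n ≤ m) (f : Fin n → M) :
    (∑ i : Fin m, if h : (i : ℕ) < n then f ⟨i, h⟩ else 0) = ∑ j : Fin n, f j := by
  rw [Fin.sum_univ_eq_sum_range (fun k => if h : k < n then f ⟨k, h⟩ else 0) m]
  rw [show (∑ j : Fin n, f j) = ∑ k ∈ Finset.range n, if h : k < n then f ⟨k, h⟩ else 0 from ?_]
  · exact (Finset.sum_subset (Finset.range_subset_range.2 hnm) (by
      intro x _ hx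
      rw [Finset.mem_range] at hx
      rw [dif_neg hx])).symm
  · rw [← Fin.sum_univ_eq_sum_range]
    exact Finset.sum_congr rfl fun j _ => by rw [dif_pos j.isLt]

lemma trace_bound {n : ℕ} (σ O : Matrix (Fin n) (Fin n) ℂ)
    (hσ : σ.PosSemidef) (htr : σ.trace = 1) (hO : O.IsHermitian) :
    (⨅ i, hO.eigenvalues i) ≤ (Matrix.trace (σ * O)).re ∧
      (Matrix.trace (σ * O)).re ≤ ⨆ i, hO.eigenvalues i := by
  have hn : Nonempty (Fin n) := by
    by_contra h
    rw [not_nonempty_iff] at h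
    simp [Matrix.trace, Finset.univ_eq_empty, eq_comm] at htr
  set U : Matrix (Fin n) (Fin n) ℂ := (hO.eigenvectorUnitary : Matrix (Fin n) (Fin n) ℂ) with hU
  set T : Matrix (Fin n) (Fin n) ℂ := Uᴴ * σ * U with hT
  have hUU : U * Uᴴ = 1 := by
    simpa [star_eq_conjTranspose] using (Matrix.mem_unitaryGroup_iff).mp hO.eigenvectorUnitary.2
  have hTpsd : T.PosSemidef := hσ.conjTranspose_mul_mul_same U
  have hTtr : T.trace = 1 := by
    rw [hT, Matrix.trace_mul_cycle, hUU, one_mul, htr]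
  have key : Matrix.trace (σ * O) = ∑ j, T j j * (hO.eigenvalues j : ℂ) := by
    conv_lhs => rw [hO.spectral_theorem, Unitary.conjStarAlgAut_apply]
    rw [show σ * ((hO.eigenvectorUnitary : Matrix (Fin n) (Fin n) ℂ) *
        Matrix.diagonal (RCLike.ofReal ∘ hO.eigenvalues) *
        (star (hO.eigenvectorUnitary : Matrix (Fin n) (Fin n) ℂ))) =
        σ * U * Matrix.diagonal (RCLike.ofReal ∘ hO.eigenvalues) * Uᴴ from by
      rw [hU, star_eq_conjTranspose, ← mul_assoc, ← mul_assoc]]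
    rw [Matrix.trace_mul_comm, ← mul_assoc, ← mul_assoc]
    simp [Matrix.trace, Matrix.mul_diagonal, hT, Matrix.diag]
  have hdiag : ∀ j, 0 ≤ (T j j).re ∧ (T j j).im = 0 := by
    intro j
    have h1 := (Matrix.posSemidef_iff_dotProduct_mulVec.mp hTpsd).2 (Pi.single j 1)
    have h2 : dotProduct (star (Pi.single j 1)) (T *ᵥ Pi.single j 1) = T j j := by
      simp [dotProduct, Matrix.mulVec_single, Pi.single_apply, Finset.sum_ite_eq]
    rw [h2] at h1
    exact ⟨(Complex.le_def.mp h1).1, ((Complex.le_def.mp h1).2).symm⟩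
  have hre : (Matrix.trace (σ * O)).re = ∑ j, (T j j).re * hO.eigenvalues j := by
    rw [key, Complex.re_sum]
    exact Finset.sum_congr rfl fun j _ => by
      rw [Complex.mul_re, Complex.ofReal_re, Complex.ofReal_im, mul_zero, sub_zero]
  have hwsum : ∑ j, (T j j).re = 1 := by
    have := congrArg Complex.re hTtr
    rwa [Matrix.trace, Complex.re_sum, Complex.one_re] at this
  have hbddB : BddBelow (Set.range hO.eigenvalues) := Set.Finite.bddBelow (Set.finite_range _)
  have hbddA : BddAbove (Set.range hO.eigenvalues) := Set.Finite.bddAbove (Set.finite_range _)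
  constructor
  · rw [hre]
    calc (⨅ i, hO.eigenvalues i) = ∑ j, (T j j).re * (⨅ i, hO.eigenvalues i) := by
          rw [← Finset.sum_mul, hwsum, one_mul]
      _ ≤ ∑ j, (T j j).re * hO.eigenvalues j :=
          Finset.sum_le_sum fun j _ =>
            mul_le_mul_of_nonneg_left (ciInf_le hbddB j) (hdiag j).1
  · rw [hre]
    calc (∑ j, (T j j).re * hO.eigenvalues j) ≤ ∑ j, (T j j).re * (⨆ i, hO.eigenvalues i) :=
          Finset.sum_le_sum fun j _ =>
            mul_le_mul_of_nonneg_left (le_ciSup hbddA j) (hdiag j).1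
      _ = ⨆ i, hO.eigenvalues i := by rw [← Finset.sum_mul, hwsum, one_mul]

lemma attain {n : ℕ} (ρ O : Matrix (Fin n) (Fin n) ℂ) (hρtr : ρ.trace = 1)
    (v : Fin n → ℂ) (hv : dotProduct (star v) v = 1) (μ : ℝ)
    (hvO : O *ᵥ v = (μ : ℂ) • v) :
    ∃ K : Fin (n ^ 2) → Matrix (Fin n) (Fin n) ℂ, (∑ i, (K i)ᴴ * K i = 1) ∧
      (Matrix.trace ((∑ i, K i * ρ * (K i)ᴴ) * O)).re = μ := by
  have hle : n ≤ n ^ 2 := Nat.le_self_pow two_ne_zero n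
  have hv' : (∑ c, (starRingEnd ℂ) (v c) * v c) = 1 := by
    simpa [dotProduct, Complex.star_def] using hv
  set f : Fin n → Matrix (Fin n) (Fin n) ℂ := fun j => vecMulVec v (Pi.single j 1) with hf
  have hc1 : ∀ j : Fin n, (f j)ᴴ * f j = Matrix.single j j 1 := by
    intro j
    ext a b
    simp only [hf, Matrix.mul_apply, Matrix.conjTranspose_apply, Matrix.vecMulVec_apply,
      Pi.single_apply, star_mul', apply_ite (star : ℂ → ℂ), star_one, star_zero,
      Matrix.single, Matrix.of_apply, mul_ite, ite_mul, mul_one, mul_zero, zero_mul,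
      one_mul]
    by_cases h1 : a = j <;> by_cases h2 : b = j
    · simp [h1, h2, hv']
    · simp [h1, h2, Ne.symm h2]
    · simp [h1, Ne.symm h1]
    · simp [h1, Ne.symm h1]
  have hc2 : ∀ j : Fin n, f j * ρ * (f j)ᴴ = ρ j j • vecMulVec v (star v) := by
    intro j
    ext a b
    simp only [hf, Matrix.mul_apply, Matrix.conjTranspose_apply, Matrix.vecMulVec_apply,
      Pi.single_apply, star_mul', apply_ite (star : ℂ → ℂ), star_one, star_zero,
      Matrix.smul_apply, Pi.star_apply, smul_eq_mul, mul_ite, ite_mul, mul_one, mul_zero,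
      zero_mul, one_mul, Finset.sum_ite_eq, Finset.sum_ite_eq', Finset.mem_univ, if_true]
    ring
  refine ⟨fun i => if h : (i : ℕ) < n then f ⟨i, h⟩ else 0, ?_, ?_⟩
  · have h1 : (∑ i : Fin (n ^ 2), ((if h : (i : ℕ) < n then f ⟨i, h⟩ else 0))ᴴ *
        (if h : (i : ℕ) < n then f ⟨i, h⟩ else 0)) =
        ∑ i : Fin (n ^ 2), (if h : (i : ℕ) < n then (f ⟨i, h⟩)ᴴ * f ⟨i, h⟩ else 0) := by
      refine Finset.sum_congr rfl fun i _ => ?_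
      split <;> simp
    rw [h1, sum_dite_extend hle (fun j => (f j)ᴴ * f j),
      Finset.sum_congr rfl (fun j _ => hc1 j)]
    ext a b
    simp only [Matrix.sum_apply, Matrix.single, Matrix.of_apply]
    by_cases hab : a = b
    · subst hab
      simp [Matrix.one_apply]
    · rw [Finset.sum_eq_zero, Matrix.one_apply_ne hab]
      intro j _
      rw [if_neg]
      rintro ⟨rfl, rfl⟩
      exact hab rfl
  · have h2 : (∑ i : Fin (n ^ 2), (if h : (i : ℕ) < n then f ⟨i, h⟩ else 0) * ρ *
        ((if h : (i : ℕ) < n then f ⟨i, h⟩ else 0))ᴴ) =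
        ∑ i : Fin (n ^ 2), (if h : (i : ℕ) < n then f ⟨i, h⟩ * ρ * (f ⟨i, h⟩)ᴴ else 0) := by
      refine Finset.sum_congr rfl fun i _ => ?_
      split <;> simp
    rw [h2, sum_dite_extend hle (fun j => f j * ρ * (f j)ᴴ),
      Finset.sum_congr rfl (fun j _ => hc2 j), ← Finset.sum_smul,
      show (∑ j, ρ j j) = ρ.trace from rfl, hρtr, one_smul]
    have h4 : Matrix.trace (vecMulVec v (star v) * O) = (μ : ℂ) := by
      rw [Matrix.vecMulVec_eq (Fin 1), Matrix.mul_assoc, Matrix.trace_mul_comm,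
        ← Matrix.replicateRow_vecMul, Matrix.trace_mul_comm, Matrix.trace_replicateCol_mul_replicateRow,
        dotProduct_comm, ← Matrix.dotProduct_mulVec, hvO, dotProduct_smul,
        smul_eq_mul, hv, mul_one]
    rw [h4, Complex.ofReal_re]

lemma eig_vec_facts {n : ℕ} (O : Matrix (Fin n) (Fin n) ℂ) (hO : O.IsHermitian) (j : Fin n) :
    dotProduct (star ⇑(hO.eigenvectorBasis j)) ⇑(hO.eigenvectorBasis j) = 1 ∧
    O *ᵥ ⇑(hO.eigenvectorBasis j) = (hO.eigenvalues j : ℂ) • ⇑(hO.eigenvectorBasis j) := by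
  constructor
  · have h1 := hO.eigenvectorBasis.orthonormal.1 j
    have h2 : (inner ℂ (hO.eigenvectorBasis j) (hO.eigenvectorBasis j) : ℂ) =
        dotProduct (star ⇑(hO.eigenvectorBasis j)) ⇑(hO.eigenvectorBasis j) := by
      rw [EuclideanSpace.inner_eq_star_dotProduct, dotProduct_comm]
    rw [← h2, inner_self_eq_norm_sq_to_K, h1]
    norm_num
  · rw [hO.mulVec_eigenvectorBasis j]
    ext c
    simp [Complex.real_smul]

/-- With `λ = n²` Kraus operators, the objective `J(K) = Tr[(∑ i, K i ρ (K i)ᴴ) O]` on the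
Stiefel manifold `{K | ∑ i, (K i)ᴴ K i = 1}` is bounded between the smallest and largest
eigenvalues of the Hermitian observable `O`, and both bounds are attained. -/
theorem landscape_global_extrema (n : ℕ)
    (ρ O : Matrix (Fin n) (Fin n) ℂ)
    (hρ : ρ.PosSemidef) (hρtr : ρ.trace = 1) (hO : O.IsHermitian) :
    (∀ K : Fin (n ^ 2) → Matrix (Fin n) (Fin n) ℂ, (∑ i, (K i)ᴴ * K i = 1) →
        (⨅ i, hO.eigenvalues i) ≤ (Matrix.trace ((∑ i, K i * ρ * (K i)ᴴ) * O)).re ∧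
        (Matrix.trace ((∑ i, K i * ρ * (K i)ᴴ) * O)).re ≤ ⨆ i, hO.eigenvalues i) ∧
    (∃ K : Fin (n ^ 2) → Matrix (Fin n) (Fin n) ℂ, (∑ i, (K i)ᴴ * K i = 1) ∧
        (Matrix.trace ((∑ i, K i * ρ * (K i)ᴴ) * O)).re = ⨅ i, hO.eigenvalues i) ∧
    (∃ K : Fin (n ^ 2) → Matrix (Fin n) (Fin n) ℂ, (∑ i, (K i)ᴴ * K i = 1) ∧
        (Matrix.trace ((∑ i, K i * ρ * (K i)ᴴ) * O)).re = ⨆ i, hO.eigenvalues i) := by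
  have hnE : Nonempty (Fin n) := by
    by_contra h
    rw [not_nonempty_iff] at h
    simp [Matrix.trace, Finset.univ_eq_empty, eq_comm] at hρtr
  refine ⟨?_, ?_, ?_⟩
  · intro K hK
    have hσpsd : (∑ i, K i * ρ * (K i)ᴴ).PosSemidef := by
      refine Finset.sum_induction _ _ (fun A B hA hB => hA.add hB) Matrix.PosSemidef.zero
        (fun i _ => hρ.mul_mul_conjTranspose_same (K i))
    have hσtr : (∑ i, K i * ρ * (K i)ᴴ).trace = 1 := by
      rw [Matrix.trace_sum]
      calc (∑ i, Matrix.trace (K i * ρ * (K i)ᴴ))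
          = ∑ i, Matrix.trace ((K i)ᴴ * (K i) * ρ) := by
            refine Finset.sum_congr rfl fun i _ => ?_
            rw [Matrix.trace_mul_cycle]
        _ = Matrix.trace ((∑ i, (K i)ᴴ * K i) * ρ) := by
            rw [Finset.sum_mul, Matrix.trace_sum]
        _ = 1 := by rw [hK, one_mul, hρtr]
    exact trace_bound _ _ hσpsd hσtr hO
  · obtain ⟨j, hj⟩ := exists_eq_ciInf_of_finite (f := hO.eigenvalues)
    obtain ⟨K, hK1, hK2⟩ := attain ρ O hρtr _ (eig_vec_facts O hO j).1 (hO.eigenvalues j)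
      (eig_vec_facts O hO j).2
    exact ⟨K, hK1, by rw [hK2, hj]⟩
  · obtain ⟨j, hj⟩ := exists_eq_ciSup_of_finite (f := hO.eigenvalues)
    obtain ⟨K, hK1, hK2⟩ := attain ρ O hρtr _ (eig_vec_facts O hO j).1 (hO.eigenvalues j)
      (eig_vec_facts O hO j).2
    exact ⟨K, hK1, by rw [hK2, hj]⟩
end
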